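/- Let K = ℚ(√33). On the elliptic curve over K defined by y² = x³ + (28296√33 − 162675)x + 35441118 − 6168312√33, the point (147 − 24√33, 540 − 108√33) is a torsion point of order 18. -/

import Mathlib

open WeierstrassCurve Polynomial

private lemma some_congr {F : Type*} [Field F] {W : WeierstrassCurve.Affine F} {x₁ y₁ x₂ y₂ : F}
    (h₁ : W.Nonsingular x₁ y₁) (h₂ : W.Nonsingular x₂ y₂) (hx : x₁ = x₂) (hy : y₁ = y₂) :
    WeierstrassCurve.Affine.Point.some _ _ h₁ = WeierstrassCurve.Affine.Point.some _ _ h₂ := by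
  subst hx; subst hy; rfl

open Classical in
/-- K = ℚ(√(33)); the given point is a torsion point of order 18. -/
theorem stmt_8 {K : Type*} [Field K] [Algebra ℚ K] (s : K) (hs : s ^ 2 = 33)
    (hK : ∀ x : K, ∃ a b : ℚ, x = algebraMap ℚ K a + algebraMap ℚ K b * s) :
    ∃ h : WeierstrassCurve.Affine.Nonsingular (⟨0, 0, 0, 28296 * s - 162675, 35441118 - 6168312 * s⟩ : WeierstrassCurve.Affine K) (147 - 24 * s) (540 - 108 * s),
      addOrderOf (WeierstrassCurve.Affine.Point.some _ _ h) = 18 := by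
  haveI : CharZero K := charZero_of_injective_algebraMap (algebraMap ℚ K).injective
  have key : ∀ a b : ℚ, a ^ 2 ≠ 33 * b ^ 2 → (a : K) + (b : K) * s ≠ 0 := by
    intro a b hab h
    apply hab
    have h2 : ((a ^ 2 : ℚ) : K) = ((33 * b ^ 2 : ℚ) : K) := by
      push_cast
      linear_combination ((a : K) - (b : K) * s) * h + ((b : K)) ^ 2 * hs
    exact_mod_cast h2
  set W : WeierstrassCurve.Affine K :=
    ⟨0, 0, 0, 28296 * s - 162675, 35441118 - 6168312 * s⟩ with hW
  have ha1 : W.a₁ = 0 := rfl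
  have ha2 : W.a₂ = 0 := rfl
  have ha3 : W.a₃ = 0 := rfl
  have ha4 : W.a₄ = 28296 * s - 162675 := rfl
  have ha6 : W.a₆ = 35441118 - 6168312 * s := rfl
  -- nonsingularity of the multiples
  have h1 : W.Nonsingular (147 - 24 * s) (540 - 108 * s) := by
    rw [WeierstrassCurve.Affine.nonsingular_iff, WeierstrassCurve.Affine.equation_iff]
    refine ⟨?_, Or.inr ?_⟩
    · simp only [ha1, ha2, ha3, ha4, ha6]
      linear_combination (436752 + 13824 * s) * hs
    · simp only [ha1, ha3]
      exact fun h => key 1080 (-216) (by norm_num) (by push_cast; linear_combination h)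
  have h2 : W.Nonsingular (327 - 60 * s) (6264 - 1080 * s) := by
    rw [WeierstrassCurve.Affine.nonsingular_iff, WeierstrassCurve.Affine.equation_iff]
    refine ⟨?_, Or.inr ?_⟩
    · simp only [ha1, ha2, ha3, ha4, ha6]
      linear_combination (-667440 + 216000 * s) * hs
    · simp only [ha1, ha3]
      exact fun h => key 12528 (-2160) (by norm_num) (by push_cast; linear_combination h)
  have h3 : W.Nonsingular (-33 + 12 * s) (5184 - 864 * s) := by
    rw [WeierstrassCurve.Affine.nonsingular_iff, WeierstrassCurve.Affine.equation_iff]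
    refine ⟨?_, Or.inr ?_⟩
    · simp only [ha1, ha2, ha3, ha4, ha6]
      linear_combination (421200 - 1728 * s) * hs
    · simp only [ha1, ha3]
      exact fun h => key 10368 (-1728) (by norm_num) (by push_cast; linear_combination h)
  have h6 : W.Nonsingular (207 - 36 * s) (-1296 + 240 * s) := by
    rw [WeierstrassCurve.Affine.nonsingular_iff, WeierstrassCurve.Affine.equation_iff]
    refine ⟨?_, Or.inr ?_⟩
    · simp only [ha1, ha2, ha3, ha4, ha6]
      linear_combination (271440 + 46656 * s) * hs
    · simp only [ha1, ha3]
      exact fun h => key (-2592) 480 (by norm_num) (by push_cast; linear_combination h)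
  have h9 : W.Nonsingular (285/2 - 57/2 * s) 0 := by
    rw [WeierstrassCurve.Affine.nonsingular_iff, WeierstrassCurve.Affine.equation_iff]
    refine ⟨?_, Or.inl ?_⟩
    · simp only [ha1, ha2, ha3, ha4, ha6]
      linear_combination (3673593/8 + (185193/8) * s) * hs
    · simp only [ha1, ha2, ha4]
      exact fun h => key (-42687/2) (7857/2) (by norm_num)
        (by push_cast; linear_combination -h - (9747/4) * hs)
  -- the Y-nonvanishing hypotheses for doubling
  have n1 : (540 - 108 * s) ≠ W.negY (147 - 24 * s) (540 - 108 * s) := by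
    simp only [WeierstrassCurve.Affine.negY, ha1, ha3]
    exact fun h => key 1080 (-216) (by norm_num) (by push_cast; linear_combination h)
  have n3 : (5184 - 864 * s) ≠ W.negY (-33 + 12 * s) (5184 - 864 * s) := by
    simp only [WeierstrassCurve.Affine.negY, ha1, ha3]
    exact fun h => key 10368 (-1728) (by norm_num) (by push_cast; linear_combination h)
  -- x-coordinate inequalities
  have hx21 : (327 - 60 * s) ≠ (147 - 24 * s) :=
    fun h => key 180 (-36) (by norm_num) (by push_cast; linear_combination h)
  have hx63 : (207 - 36 * s) ≠ (-33 + 12 * s) :=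
    fun h => key 240 (-48) (by norm_num) (by push_cast; linear_combination h)
  -- slopes
  have hL2 : W.slope (147 - 24 * s) (147 - 24 * s) (540 - 108 * s) (540 - 108 * s)
      = -18 + 3 * s := by
    rw [WeierstrassCurve.Affine.slope_of_Y_ne rfl n1, div_eq_iff (sub_ne_zero.mpr n1)]
    simp only [WeierstrassCurve.Affine.negY, ha1, ha2, ha3, ha4]
    linear_combination 2376 * hs
  have hL3 : W.slope (327 - 60 * s) (147 - 24 * s) (6264 - 1080 * s) (540 - 108 * s)
      = 12 - 3 * s := by
    rw [WeierstrassCurve.Affine.slope_of_X_ne hx21, div_eq_iff (sub_ne_zero.mpr hx21)]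
    linear_combination (-108) * hs
  have hL6 : W.slope (-33 + 12 * s) (-33 + 12 * s) (5184 - 864 * s) (5184 - 864 * s)
      = -3 + 2 * s := by
    rw [WeierstrassCurve.Affine.slope_of_Y_ne rfl n3, div_eq_iff (sub_ne_zero.mpr n3)]
    simp only [WeierstrassCurve.Affine.negY, ha1, ha2, ha3, ha4]
    linear_combination 3888 * hs
  have hL9 : W.slope (207 - 36 * s) (-33 + 12 * s) (-1296 + 240 * s) (5184 - 864 * s)
      = -21/2 + 5/2 * s := by
    rw [WeierstrassCurve.Affine.slope_of_X_ne hx63, div_eq_iff (sub_ne_zero.mpr hx63)]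
    linear_combination 120 * hs
  -- addition steps
  have e2 : WeierstrassCurve.Affine.Point.some _ _ h1 + WeierstrassCurve.Affine.Point.some _ _ h1
      = WeierstrassCurve.Affine.Point.some _ _ h2 := by
    rw [WeierstrassCurve.Affine.Point.add_self_of_Y_ne n1]
    refine some_congr _ h2 ?_ ?_
    · rw [hL2]
      simp only [WeierstrassCurve.Affine.addX, ha1, ha2]
      linear_combination 9 * hs
    · rw [WeierstrassCurve.Affine.addY, WeierstrassCurve.Affine.negAddY,
        WeierstrassCurve.Affine.addX, WeierstrassCurve.Affine.negY, hL2]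
      simp only [ha1, ha2, ha3]
      linear_combination (270 - 27 * s) * hs
  have e3 : WeierstrassCurve.Affine.Point.some _ _ h2 + WeierstrassCurve.Affine.Point.some _ _ h1
      = WeierstrassCurve.Affine.Point.some _ _ h3 := by
    rw [WeierstrassCurve.Affine.Point.add_of_X_ne hx21]
    refine some_congr _ h3 ?_ ?_
    · rw [hL3]
      simp only [WeierstrassCurve.Affine.addX, ha1, ha2]
      linear_combination 9 * hs
    · rw [WeierstrassCurve.Affine.addY, WeierstrassCurve.Affine.negAddY,
        WeierstrassCurve.Affine.addX, WeierstrassCurve.Affine.negY, hL3]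
      simp only [ha1, ha2, ha3]
      linear_combination (108 + 27 * s) * hs
  have e6 : WeierstrassCurve.Affine.Point.some _ _ h3 + WeierstrassCurve.Affine.Point.some _ _ h3
      = WeierstrassCurve.Affine.Point.some _ _ h6 := by
    rw [WeierstrassCurve.Affine.Point.add_self_of_Y_ne n3]
    refine some_congr _ h6 ?_ ?_
    · rw [hL6]
      simp only [WeierstrassCurve.Affine.addX, ha1, ha2]
      linear_combination 4 * hs
    · rw [WeierstrassCurve.Affine.addY, WeierstrassCurve.Affine.negAddY,
        WeierstrassCurve.Affine.addX, WeierstrassCurve.Affine.negY, hL6]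
      simp only [ha1, ha2, ha3]
      linear_combination (108 - 8 * s) * hs
  have e9 : WeierstrassCurve.Affine.Point.some _ _ h6 + WeierstrassCurve.Affine.Point.some _ _ h3
      = WeierstrassCurve.Affine.Point.some _ _ h9 := by
    rw [WeierstrassCurve.Affine.Point.add_of_X_ne hx63]
    refine some_congr _ h9 ?_ ?_
    · rw [hL9]
      simp only [WeierstrassCurve.Affine.addX, ha1, ha2]
      linear_combination (25/4) * hs
    · rw [WeierstrassCurve.Affine.addY, WeierstrassCurve.Affine.negAddY,
        WeierstrassCurve.Affine.addX, WeierstrassCurve.Affine.negY, hL9]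
      simp only [ha1, ha2, ha3]
      linear_combination (375/8 - (125/8) * s) * hs
  have e18 : WeierstrassCurve.Affine.Point.some _ _ h9 + WeierstrassCurve.Affine.Point.some _ _ h9
      = 0 := by
    refine WeierstrassCurve.Affine.Point.add_of_Y_eq rfl ?_
    simp only [WeierstrassCurve.Affine.negY, ha1, ha3]
    ring
  refine ⟨h1, ?_⟩
  set Q := WeierstrassCurve.Affine.Point.some _ _ h1 with hQ
  have s2 : 2 • Q = WeierstrassCurve.Affine.Point.some _ _ h2 := by
    rw [two_nsmul]; exact e2
  have s3 : 3 • Q = WeierstrassCurve.Affine.Point.some _ _ h3 := by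
    rw [show (3 : ℕ) = 2 + 1 from rfl, add_nsmul, one_nsmul, s2]; exact e3
  have s6 : 6 • Q = WeierstrassCurve.Affine.Point.some _ _ h6 := by
    rw [show (6 : ℕ) = 3 + 3 from rfl, add_nsmul, s3]; exact e6
  have s9 : 9 • Q = WeierstrassCurve.Affine.Point.some _ _ h9 := by
    rw [show (9 : ℕ) = 6 + 3 from rfl, add_nsmul, s6, s3]; exact e9
  have s18 : (18 : ℕ) • Q = 0 := by
    rw [show (18 : ℕ) = 9 + 9 from rfl, add_nsmul, s9]; exact e18
  have hd : addOrderOf Q ∣ 18 := addOrderOf_dvd_of_nsmul_eq_zero s18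
  have h9ne : ¬ addOrderOf Q ∣ 9 := fun h =>
    WeierstrassCurve.Affine.Point.some_ne_zero h9
      (s9 ▸ addOrderOf_dvd_iff_nsmul_eq_zero.mp h)
  have h6ne : ¬ addOrderOf Q ∣ 6 := fun h =>
    WeierstrassCurve.Affine.Point.some_ne_zero h6
      (s6 ▸ addOrderOf_dvd_iff_nsmul_eq_zero.mp h)
  obtain ⟨n, hn⟩ : ∃ n, addOrderOf Q = n := ⟨_, rfl⟩
  rw [hn] at hd h9ne h6ne ⊢
  have hle : n ≤ 18 := Nat.le_of_dvd (by norm_num) hd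
  interval_cases n <;> omega
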